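/- arXiv:1202.2280 — 2 statements merged into one kernel-verified Lean document; each statement's English description precedes it below -/
import Mathlib

section
/- In a hyperbolic affine 2-space, an arrow is invertible if and only if it is an identity arrow. -/
/-- An affine 2-space: a (plainly presented) small category together with a
reflexive symmetric linkability relation `R` on objects and a map `phi` from
nonempty `R`-linkable sequences of objects (written target-first, i.e.
`φ(y,...,x)` is the list `[y,...,x]`) to morphisms, satisfying the axioms of
Viennot. -/
structure Affine2Space where
  O : Type
  M : Type
  src : M → O
  tgt : M → O
  ide : O → M
  comp : M → M → M
  src_ide : ∀ x, src (ide x) = x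
  tgt_ide : ∀ x, tgt (ide x) = x
  src_comp : ∀ g f, src g = tgt f → src (comp g f) = src f
  tgt_comp : ∀ g f, src g = tgt f → tgt (comp g f) = tgt g
  ide_comp : ∀ f, comp (ide (tgt f)) f = f
  comp_ide : ∀ f, comp f (ide (src f)) = f
  comp_assoc : ∀ h g f, src g = tgt f → src h = tgt g →
    comp h (comp g f) = comp (comp h g) f
  R : O → O → Prop
  R_refl : ∀ x, R x x
  R_symm : ∀ x y, R x y → R y x
  phi : List O → M
  -- axiom 0 : source and target of φ(y,...,x)
  phi_src : ∀ (l : List O) (h : l ≠ []), l.Chain' R → src (phi l) = l.getLast h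
  phi_tgt : ∀ (l : List O) (h : l ≠ []), l.Chain' R → tgt (phi l) = l.head h
  -- axiom i : φ(x) = id_x and deletion of consecutive repetitions
  phi_single : ∀ x, phi [x] = ide x
  phi_dedup : ∀ (l₁ l₂ : List O) (x : O), (l₁ ++ x :: x :: l₂).Chain' R →
    phi (l₁ ++ x :: x :: l₂) = phi (l₁ ++ x :: l₂)
  -- axiom ii : φ(z,...,y)∘φ(y,...,x) = φ(z,...,y,...,x)
  phi_comp : ∀ (l₁ l₂ : List O) (y : O), (l₂ ++ [y]).Chain' R → (y :: l₁).Chain' R →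
    comp (phi (l₂ ++ [y])) (phi (y :: l₁)) = phi (l₂ ++ y :: l₁)
  -- axiom iii : surjectivity and uniqueness of the minimal representing sequence
  phi_surj : ∀ f : M, ∃ l : List O, l ≠ [] ∧ l.Chain' R ∧ phi l = f
  phi_min_unique : ∀ (f : M) (l₁ l₂ : List O), l₁ ≠ [] → l₂ ≠ [] →
    l₁.Chain' R → l₂.Chain' R → phi l₁ = f → phi l₂ = f →
    (∀ l : List O, l ≠ [] → l.Chain' R → phi l = f → l₁.length ≤ l.length) →
    (∀ l : List O, l ≠ [] → l.Chain' R → phi l = f → l₂.length ≤ l.length) →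
    l₁ = l₂

/-- A Euclidean affine 2-space: `R` is transitive and `φ` of a linkable
sequence only depends on its endpoints: `φ(y,...,x) = φ(y,x)`. -/
def Affine2Space.Euclidean (A : Affine2Space) : Prop :=
  (∀ x y z, A.R x y → A.R y z → A.R x z) ∧
  (∀ (l : List A.O) (h : l ≠ []), l.Chain' A.R →
    A.phi l = A.phi [l.head h, l.getLast h])


lemma aux_destutter'_singleton {α : Type*} [DecidableRel (fun (a b : α) => a ≠ b)] :
    ∀ (l : List α) (a x : α), l.destutter' (· ≠ ·) a = [x] → a = x ∧ ∀ b ∈ l, b = x := by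
  intro l
  induction l with
  | nil => intro a x h; simp [List.destutter'] at h; simp [h]
  | cons b t ih =>
    intro a x h
    by_cases hab : a ≠ b
    · simp only [List.destutter', if_pos hab] at h
      injection h with h1 h2
      exact absurd h2 (t.destutter'_ne_nil _)
    · simp only [List.destutter', if_neg hab] at h
      push_neg at hab
      obtain ⟨h1, h2⟩ := ih a x h
      refine ⟨h1, ?_⟩
      intro c hc
      rcases List.mem_cons.mp hc with rfl | hc
      · rw [← hab]; exact h1
      · exact h2 c hc

lemma aux_destutter_singleton {α : Type*} [DecidableRel (fun (a b : α) => a ≠ b)]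
    (l : List α) (x : α) (h : l.destutter (· ≠ ·) = [x]) : ∀ a ∈ l, a = x := by
  cases l with
  | nil => simp
  | cons a t =>
    rw [List.destutter_cons'] at h
    obtain ⟨h1, h2⟩ := aux_destutter'_singleton t a x h
    intro c hc
    rcases List.mem_cons.mp hc with rfl | hc
    · exact h1
    · exact h2 c hc

lemma Affine2Space.chain'_replicate (A : Affine2Space) (n : ℕ) (x : A.O) :
    (List.replicate n x).Chain' A.R := by
  induction n with
  | zero => exact List.isChain_nil
  | succ k ih =>
    cases k with
    | zero => exact List.isChain_singleton x
    | succ j =>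
      rw [List.replicate_succ, List.replicate_succ, List.Chain', List.isChain_cons_cons,
        ← List.replicate_succ]
      exact ⟨A.R_refl x, ih⟩

lemma Affine2Space.phi_replicate (A : Affine2Space) (x : A.O) :
    ∀ n, A.phi (List.replicate (n + 1) x) = A.ide x := by
  intro n
  induction n with
  | zero => simpa using A.phi_single x
  | succ k ih =>
    have hch : ((([] : List A.O) ++ x :: x :: List.replicate k x)).Chain' A.R := by
      simpa [List.replicate_succ] using A.chain'_replicate (k + 2) x
    have h := A.phi_dedup [] (List.replicate k x) x hch
    simp only [List.nil_append] at h
    rw [List.replicate_succ, List.replicate_succ]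
    rw [h, ← List.replicate_succ]
    exact ih

open Classical in
/-- A hyperbolic affine 2-space: linkable sequences of every positive length
exist, and `φ(y₁,...,x₁) = φ(y₂,...,x₂)` forces the two sequences to be equal
modulo consecutive repetitions (the destuttered lists coincide). -/
noncomputable def Affine2Space.Hyperbolic (A : Affine2Space) : Prop :=
  (∀ n : ℕ, 0 < n → ∃ l : List A.O, l.length = n ∧ l.Chain' A.R) ∧
  (∀ l₁ l₂ : List A.O, l₁ ≠ [] → l₂ ≠ [] → l₁.Chain' A.R → l₂.Chain' A.R →
    A.phi l₁ = A.phi l₂ →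
    l₁.destutter (· ≠ ·) = l₂.destutter (· ≠ ·))

/-- In a hyperbolic affine 2-space, an arrow is invertible if and
only if it is an identity arrow. -/
theorem hyperbolic_invertible_iff_identity (A : Affine2Space)
    (hA : A.Hyperbolic) (f : A.M) :
    (∃ g : A.M, A.src g = A.tgt f ∧ A.tgt g = A.src f ∧
      A.comp g f = A.ide (A.src f) ∧ A.comp f g = A.ide (A.tgt f)) ↔
    (∃ x : A.O, f = A.ide x) := by
  classical
  constructor
  · rintro ⟨g, hs, ht, hgf, hfg⟩
    obtain ⟨l, hl, hlc, hlf⟩ := A.phi_surj f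
    obtain ⟨m, hm, hmc, hmg⟩ := A.phi_surj g
    set x := l.getLast hl with hx
    refine ⟨x, ?_⟩
    -- key : last of m = head of l
    have hsrc : A.src (A.phi m) = m.getLast hm := A.phi_src m hm hmc
    have htgt : A.tgt (A.phi l) = l.head hl := A.phi_tgt l hl hlc
    have hkey : m.getLast hm = l.head hl := by
      rw [← hsrc, ← htgt, hmg, hlf]; exact hs
    have hsf : A.src f = x := by rw [← hlf]; exact A.phi_src l hl hlc
    -- decompose m and l
    have hmdec : m.dropLast ++ [l.head hl] = m := by
      rw [← hkey]; exact List.dropLast_append_getLast hm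
    have hldec : l.head hl :: l.tail = l := List.cons_head_tail hl
    have hc1 : (m.dropLast ++ [l.head hl]).Chain' A.R := by rw [hmdec]; exact hmc
    have hc2 : (l.head hl :: l.tail).Chain' A.R := by rw [hldec]; exact hlc
    have hcomp := A.phi_comp l.tail m.dropLast (l.head hl) hc1 hc2
    have hf2 : A.phi (l.head hl :: l.tail) = f := by rw [hldec]; exact hlf
    rw [hmdec, hmg, hf2] at hcomp
    have hLchain : (m.dropLast ++ l.head hl :: l.tail).Chain' A.R := by
      rw [List.Chain', List.isChain_append]
      refine ⟨(List.IsChain.prefix hmc (List.dropLast_prefix m)), hc2, ?_⟩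
      intro a ha b hb
      have h3 : (m.dropLast ++ [l.head hl]).Chain' A.R := hc1
      rw [List.Chain', List.isChain_append] at h3
      apply h3.2.2 a ha
      simp only [List.head?_cons, Option.mem_def, Option.some.injEq] at hb ⊢
      exact hb
    have hLne : (m.dropLast ++ l.head hl :: l.tail) ≠ [] := by simp [hl]
    have hphiL : A.phi (m.dropLast ++ l.head hl :: l.tail) = A.phi [x] := by
      rw [← hcomp, hgf, hsf, A.phi_single]
    have hdest := hA.2 _ [x] hLne (by simp) hLchain (List.isChain_singleton x) hphiL
    simp only [List.destutter] at hdest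
    have hall := aux_destutter_singleton _ x hdest
    have halll : ∀ a ∈ l, a = x := by
      intro a ha
      apply hall
      rw [← hldec] at ha
      exact List.mem_append_right _ ha
    have hrep : l = List.replicate l.length x :=
      List.eq_replicate_iff.mpr ⟨rfl, halll⟩
    have hlen : l.length = (l.length - 1) + 1 := by
      have : 0 < l.length := List.length_pos_iff.mpr hl
      omega
    rw [← hlf, hrep, hlen, A.phi_replicate]
  · rintro ⟨x, rfl⟩
    refine ⟨A.ide x, ?_, ?_, ?_, ?_⟩
    · rw [A.src_ide, A.tgt_ide]
    · rw [A.src_ide, A.tgt_ide]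
    · rw [A.src_ide]
      have := A.comp_ide (A.ide x)
      rwa [A.src_ide] at this
    · rw [A.tgt_ide]
      have := A.comp_ide (A.ide x)
      rwa [A.src_ide] at this
end

section
/- In a Euclidean affine 2-space with relation R transitive (hence an equivalence relation), the map sending a pair (y,x) with x R y to the morphism φ(y,x) is a bijection between the set of R-related ordered pairs of objects and the set of morphisms. -/
private lemma chain'_head_last {O : Type} {R : O → O → Prop}
    (hrefl : ∀ x, R x x) (htrans : ∀ x y z, R x y → R y z → R x z) :
    ∀ (l : List O) (h : l ≠ []), l.Chain' R → R (l.head h) (l.getLast h)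
  | [], h, _ => absurd rfl h
  | [a], _, _ => hrefl a
  | a :: b :: l, _, hc => by
    have hc' := hc
    rw [List.Chain', List.isChain_cons_cons] at hc'
    have ih := chain'_head_last hrefl htrans (b :: l) (by simp) hc'.2
    have : (a :: b :: l).getLast (by simp) = (b :: l).getLast (by simp) :=
      List.getLast_cons (by simp)
    rw [List.head_cons, this]
    exact htrans _ _ _ hc'.1 ih

/-- In a Euclidean affine 2-space (so `R` is transitive, hence an
equivalence relation), the map sending a pair `(y,x)` with `x R y` to the
morphism `φ(y,x)` is a bijection from the set of `R`-related ordered pairs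
of objects onto the set of morphisms. -/
theorem euclidean_pairs_bijective_morphisms (A : Affine2Space)
    (hA : A.Euclidean) :
    Function.Bijective
      (fun p : {p : A.O × A.O // A.R p.2 p.1} => A.phi [p.1.1, p.1.2]) := by
  constructor
  · rintro ⟨⟨y₁, x₁⟩, h₁⟩ ⟨⟨y₂, x₂⟩, h₂⟩ heq
    simp only at heq
    have hc₁ : List.Chain' A.R [y₁, x₁] := by
      simp [List.Chain', List.isChain_cons_cons]; exact A.R_symm _ _ h₁
    have hc₂ : List.Chain' A.R [y₂, x₂] := by
      simp [List.Chain', List.isChain_cons_cons]; exact A.R_symm _ _ h₂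
    have hs₁ := A.phi_src [y₁, x₁] (by simp) hc₁
    have hs₂ := A.phi_src [y₂, x₂] (by simp) hc₂
    have ht₁ := A.phi_tgt [y₁, x₁] (by simp) hc₁
    have ht₂ := A.phi_tgt [y₂, x₂] (by simp) hc₂
    simp at hs₁ hs₂ ht₁ ht₂
    rw [heq] at hs₁ ht₁
    exact Subtype.ext (Prod.ext (ht₁.symm.trans ht₂) (hs₁.symm.trans hs₂))
  · intro f
    obtain ⟨l, hne, hchain, hphi⟩ := A.phi_surj f
    have hR : A.R (l.getLast hne) (l.head hne) :=
      A.R_symm _ _ (chain'_head_last A.R_refl hA.1 l hne hchain)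
    refine ⟨⟨(l.head hne, l.getLast hne), hR⟩, ?_⟩
    simp only
    rw [← hA.2 l hne hchain, hphi]
end
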